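/- Generic regret bound, per-period form (Lemma 1): Let τ : E → ℝ with τ_e ≥ 0 for all e, let a be an equilibrium assignment under τ with edge flow x, and let b be any capacity-feasible assignment. Then (total system cost of a) − (total system cost of b) ≤ Σ_{e∈E} τ_e (c_e − x_e). -/

import Mathlib

open Finset

/-- System (untolled) cost incurred by a single user with value of time `vu` and
outside-option cost `lamu`, given their chosen option (a path or the outside option). -/
noncomputable def sysCost {E : Type*} (l : E → ℝ) (vu lamu : ℝ) : Option (Finset E) → ℝ
  | some P => vu * ∑ e ∈ P, l e
  | none   => lamu

/-- Travel cost (including tolls) incurred by a single user, given their chosen option. -/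
noncomputable def userCost {E : Type*} (l τ : E → ℝ) (vu lamu : ℝ) : Option (Finset E) → ℝ
  | some P => vu * ∑ e ∈ P, l e + ∑ e ∈ P, τ e
  | none   => lamu

/-- Total system cost of an assignment. -/
noncomputable def totalCost {E U : Type*} [Fintype U] (l : E → ℝ) (v lam : U → ℝ)
    (a : U → Option (Finset E)) : ℝ :=
  ∑ u, sysCost l (v u) (lam u) (a u)

/-- Edge flow of an assignment: the number of users whose chosen path contains `e`. -/
noncomputable def edgeFlow {E U : Type*} [Fintype U] [DecidableEq E]
    (a : U → Option (Finset E)) (e : E) : ℝ :=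
  ∑ u, (match a u with
    | some P => if e ∈ P then (1 : ℝ) else 0
    | none => 0)


/-- Toll paid by a single user, given their option. -/
noncomputable def tollCost {E : Type*} (τ : E → ℝ) : Option (Finset E) → ℝ
  | some P => ∑ e ∈ P, τ e
  | none   => 0

lemma userCost_eq_sys_add_toll {E : Type*} (l τ : E → ℝ) (vu lamu : ℝ)
    (o : Option (Finset E)) :
    userCost l τ vu lamu o = sysCost l vu lamu o + tollCost τ o := by
  cases o <;> simp [userCost, sysCost, tollCost]

lemma sum_tollCost {E U : Type*} [Fintype E] [DecidableEq E] [Fintype U]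
    (τ : E → ℝ) (a : U → Option (Finset E)) :
    ∑ u, tollCost τ (a u) = ∑ e, τ e * edgeFlow a e := by
  unfold edgeFlow
  simp only [Finset.mul_sum]
  rw [Finset.sum_comm]
  refine Finset.sum_congr rfl fun u _ => ?_
  cases h : a u <;> simp [tollCost, mul_ite, Finset.sum_ite_mem]

/-- **Generic regret bound, per-period form** (Lemma 1): for an equilibrium assignment `a`
under nonnegative tolls `τ` with edge flow `x`, and any capacity-feasible assignment `b`,
the cost difference is bounded by `Σ_e τ_e (c_e − x_e)`. -/
theorem generic_regret_bound
    {E U : Type*} [Fintype E] [Nonempty E] [DecidableEq E] [Fintype U]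
    (l c : E → ℝ) (hl : ∀ e, 0 ≤ l e) (hc : ∀ e, 0 ≤ c e)
    (v lam : U → ℝ) (hv : ∀ u, 0 ≤ v u) (hlam : ∀ u, 0 ≤ lam u)
    (paths : U → Finset (Finset E)) (hpaths : ∀ u, (paths u).Nonempty)
    (τ : E → ℝ) (hτ : ∀ e, 0 ≤ τ e)
    (a : U → Option (Finset E)) (ha : ∀ u P, a u = some P → P ∈ paths u)
    (heq : ∀ u, userCost l τ (v u) (lam u) (a u) =
      min (lam u) ((paths u).inf' (hpaths u) fun P => v u * ∑ e ∈ P, l e + ∑ e ∈ P, τ e))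
    (b : U → Option (Finset E)) (hb : ∀ u P, b u = some P → P ∈ paths u)
    (hbcap : ∀ e, edgeFlow b e ≤ c e) :
    totalCost l v lam a - totalCost l v lam b ≤ ∑ e, τ e * (c e - edgeFlow a e) := by
  have key : ∀ u, userCost l τ (v u) (lam u) (a u) ≤ userCost l τ (v u) (lam u) (b u) := by
    intro u
    rw [heq u]
    cases hbu : b u with
    | none => exact min_le_left _ _ |>.trans_eq (by simp [userCost])
    | some P =>
      refine (min_le_right _ _).trans ?_
      have := Finset.inf'_le (fun P => v u * ∑ e ∈ P, l e + ∑ e ∈ P, τ e)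
        (hb u P hbu)
      simp only [userCost]
      exact this
  have hsum : totalCost l v lam a + ∑ e, τ e * edgeFlow a e ≤
      totalCost l v lam b + ∑ e, τ e * edgeFlow b e := by
    rw [← sum_tollCost τ a, ← sum_tollCost τ b]
    unfold totalCost
    rw [← Finset.sum_add_distrib, ← Finset.sum_add_distrib]
    refine Finset.sum_le_sum fun u _ => ?_
    rw [← userCost_eq_sys_add_toll, ← userCost_eq_sys_add_toll]
    exact key u
  have hcap : ∑ e, τ e * edgeFlow b e ≤ ∑ e, τ e * c e :=
    Finset.sum_le_sum fun e _ => mul_le_mul_of_nonneg_left (hbcap e) (hτ e)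
  have hfin : totalCost l v lam a - totalCost l v lam b ≤
      ∑ e, τ e * c e - ∑ e, τ e * edgeFlow a e := by linarith
  simpa [mul_sub, Finset.sum_sub_distrib] using hfin
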